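/- Let A be a C*-algebra, D an abelian C*-subalgebra of A, and let x, y ∈ A be normalizers of D with x*y = 0. Then for every d ∈ D, x*dy = 0. -/

import Mathlib

open scoped ContinuousMapZero

section Aux

variable {A : Type*} [NonUnitalCStarAlgebra A]

/-- continuous functional calculus of an element of a closed star subalgebra stays inside. -/
lemma cfcn_mem_closed (D : NonUnitalStarSubalgebra ℂ A) (hD : IsClosed (D : Set A))
    {b : A} (hb : b ∈ D) (hsa : IsSelfAdjoint b) (f : ℝ → ℝ)
    (hf : ContinuousOn f (quasispectrum ℝ b)) (hf0 : f 0 = 0) :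
    cfcₙ f b ∈ D := by
  have key : ∀ F : ContinuousMapZero (quasispectrum ℝ b) ℝ,
      cfcₙHom (R := ℝ) hsa F ∈ D := by
    intro F
    have hcont : Continuous (cfcₙHom (R := ℝ) hsa) :=
      (cfcₙHom_isClosedEmbedding (R := ℝ) hsa).continuous
    induction F using ContinuousMapZero.induction_on_of_compact with
    | zero => simpa using zero_mem D
    | id =>
        have hid : (cfcₙHom (R := ℝ) hsa)
            (ContinuousMapZero.id (quasispectrum ℝ b)) = b :=
          cfcₙHom_id (R := ℝ) hsa
        rw [hid]; exact hb
    | star_id =>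
        have hid : (cfcₙHom (R := ℝ) hsa)
            (ContinuousMapZero.id (quasispectrum ℝ b)) = b :=
          cfcₙHom_id (R := ℝ) hsa
        rw [map_star, hid]; exact star_mem hb
    | add f g hf hg => rw [map_add]; exact add_mem hf hg
    | mul f g hf hg => rw [map_mul]; exact mul_mem hf hg
    | smul r f hf =>
        rw [map_smul, ← algebraMap_smul ℂ r (cfcₙHom (R := ℝ) hsa f)]
        exact SMulMemClass.smul_mem _ hf
    | frequently f hf =>
        have h1 : ∃ᶠ z in nhds (cfcₙHom (R := ℝ) hsa f), z ∈ (D : Set A) :=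
          (hcont.tendsto f).frequently hf
        have h2 := mem_closure_iff_frequently.mpr h1
        rwa [hD.closure_eq] at h2
  rw [cfcₙ_apply f b hf hf0 hsa]
  exact key _

/-- approximate right multiplier: if `star a * a ∈ D` then `a` is approximately
`a * g` with `g ∈ D` selfadjoint. -/
lemma approx_right_mul (D : NonUnitalStarSubalgebra ℂ A) (hD : IsClosed (D : Set A))
    (a : A) (hb : star a * a ∈ D) {ε : ℝ} (hε : 0 < ε) :
    ∃ g ∈ D, IsSelfAdjoint g ∧ ‖a - a * g‖ ≤ ε := by
  set b := star a * a with hbdef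
  have hsa : IsSelfAdjoint b := IsSelfAdjoint.star_mul_self a
  set δ : ℝ := ε ^ 2 with hδdef
  have hδ : 0 < δ := by positivity
  set f : ℝ → ℝ := fun t => min (t / δ) 1 with hfdef
  have hfc : Continuous f := (continuous_id.div_const δ).min continuous_const
  have hf0 : f 0 = 0 := by simp [hfdef]
  set g := cfcₙ f b with hgdef
  have hgD : g ∈ D := cfcn_mem_closed D hD hb hsa f hfc.continuousOn hf0
  have hg : IsSelfAdjoint g := cfcₙ_predicate f b
  refine ⟨g, hgD, hg, ?_⟩
  -- quasispectrum of `star a * a` is nonnegative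
  have hq : ∀ t ∈ quasispectrum ℝ b, 0 ≤ t := by
    intro t ht
    rw [Unitization.quasispectrum_eq_spectrum_inr' ℝ ℂ b] at ht
    have h2 : ((b : A) : Unitization ℂ A)
        = star ((a : A) : Unitization ℂ A) * ((a : A) : Unitization ℂ A) := by
      rw [hbdef, Unitization.inr_mul, Unitization.inr_star]
    rw [h2] at ht
    exact spectrum_star_mul_self_nonneg t ht
  -- the key identity
  have key : star (a - a * g) * (a - a * g) = cfcₙ (fun t => t * (1 - f t) ^ 2) b := by
    have h1 : star (a - a * g) * (a - a * g)
        = (b - b * g) - (g * b - g * (b * g)) := by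
      rw [star_sub, star_mul, hg.star_eq, hbdef]
      noncomm_ring
    have e : (fun t => t * (1 - f t) ^ 2)
        = fun t => (t - t * f t) - (f t * t - f t * (t * f t)) := by
      funext t; ring
    rw [h1, e]
    have hid : ContinuousOn (fun t : ℝ => t) (quasispectrum ℝ b) := continuousOn_id
    have hfon : ContinuousOn f (quasispectrum ℝ b) := hfc.continuousOn
    rw [cfcₙ_sub (fun t => t - t * f t) (fun t => f t * t - f t * (t * f t)) b
        (by fun_prop) (by simp [hf0]) (by fun_prop) (by simp [hf0]),
      cfcₙ_sub (fun t : ℝ => t) (fun t => t * f t) b (by fun_prop) (by simp)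
        (by fun_prop) (by simp [hf0]),
      cfcₙ_sub (fun t => f t * t) (fun t => f t * (t * f t)) b (by fun_prop)
        (by simp [hf0]) (by fun_prop) (by simp [hf0]),
      cfcₙ_mul (fun t : ℝ => t) f b (by fun_prop) (by simp) (by fun_prop) (by simp [hf0]),
      cfcₙ_mul f (fun t : ℝ => t) b (by fun_prop) (by simp [hf0]) (by fun_prop) (by simp),
      cfcₙ_mul f (fun t => t * f t) b (by fun_prop) (by simp [hf0]) (by fun_prop)
        (by simp [hf0]),
      cfcₙ_mul (fun t : ℝ => t) f b (by fun_prop) (by simp) (by fun_prop) (by simp [hf0]),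
      cfcₙ_id' ℝ b]
  -- the norm bound
  have hbound : ‖cfcₙ (fun t => t * (1 - f t) ^ 2) b‖ ≤ δ := by
    apply norm_cfcₙ_le
    intro t ht
    have ht0 : 0 ≤ t := hq t ht
    rcases le_or_gt t δ with hle | hlt
    · have h1 : t / δ ≤ 1 := (div_le_one hδ).2 hle
      have h2 : 0 ≤ t / δ := by positivity
      rw [hfdef]
      simp only [min_eq_left h1]
      rw [Real.norm_eq_abs, abs_of_nonneg (by positivity)]
      have h3 : (1 - t / δ) ^ 2 ≤ 1 := by nlinarith
      nlinarith [mul_le_mul_of_nonneg_left h3 ht0]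
    · have h1 : (1 : ℝ) ≤ t / δ := (one_le_div hδ).2 hlt.le
      rw [hfdef]
      simp only [min_eq_right h1]
      simp [hδ.le]
  have hnorm2 : ‖a - a * g‖ * ‖a - a * g‖ ≤ δ := by
    rw [← CStarRing.norm_star_mul_self, key]
    exact hbound
  nlinarith [norm_nonneg (a - a * g)]

end Aux

/-- if `D` is an abelian C*-subalgebra and `x, y` are normalizers of `D`
with `x* y = 0`, then `x* d y = 0` for every `d ∈ D`. -/
theorem orthogonal_normalizers_mixed_product {A : Type*} [NonUnitalCStarAlgebra A]
    (D : NonUnitalStarSubalgebra ℂ A) (hD : IsClosed (D : Set A))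
    (hcomm : ∀ x ∈ D, ∀ y ∈ D, x * y = y * x)
    (x y : A)
    (hx : ∀ d ∈ D, star x * d * x ∈ D ∧ x * d * star x ∈ D)
    (hy : ∀ d ∈ D, star y * d * y ∈ D ∧ y * d * star y ∈ D)
    (horth : star x * y = 0) :
    ∀ d ∈ D, star x * d * y = 0 := by
  intro d hd
  have hzero : star y * x = 0 := by
    have h := congrArg star horth
    simpa [star_mul] using h
  set a : A := d * y with ha
  set u : A := star x * d * y with hu
  have hb : star a * a ∈ D := by
    have h := (hy (star d * d) (mul_mem (star_mem hd) hd)).1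
    have h2 : star a * a = star y * (star d * d) * y := by
      rw [ha]; simp [star_mul, mul_assoc]
    rwa [h2]
  set C : ℝ := ‖star x‖ * (‖star a‖ * ‖x‖) with hC
  have hCnn : 0 ≤ C := by positivity
  have key : ∀ ε : ℝ, 0 < ε → ‖u * star u‖ ≤ ε * C := by
    intro ε hε
    obtain ⟨g, hgD, hgsa, hgnorm⟩ := approx_right_mul D hD a hb hε
    have hE : y * g * star y ∈ D := (hy g hgD).2
    have hF : d * (y * g * star y) ∈ D := mul_mem hd hE
    have hswap : d * (y * g * star y) * star d = star d * (d * (y * g * star y)) :=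
      hcomm _ hF _ (star_mem hd)
    have expand : u * star u
        = star x * ((a - a * g) * (star a * x))
          + star x * ((d * (y * g * star y) * star d) * x) := by
      rw [hu, ha]
      simp only [star_mul, star_star]
      noncomm_ring
    rw [hswap] at expand
    have h2 : star x * ((star d * (d * (y * g * star y))) * x) = 0 := by
      simp only [mul_assoc, hzero, mul_zero]
    rw [h2, add_zero] at expand
    calc ‖u * star u‖ = ‖star x * ((a - a * g) * (star a * x))‖ := by rw [expand]
      _ ≤ ‖star x‖ * ‖(a - a * g) * (star a * x)‖ := norm_mul_le _ _
      _ ≤ ‖star x‖ * (‖a - a * g‖ * ‖star a * x‖) := by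
          gcongr; exact norm_mul_le _ _
      _ ≤ ‖star x‖ * (‖a - a * g‖ * (‖star a‖ * ‖x‖)) := by
          gcongr; exact norm_mul_le _ _
      _ ≤ ‖star x‖ * (ε * (‖star a‖ * ‖x‖)) := by gcongr
      _ = ε * C := by rw [hC]; ring
  have hnorm0 : ‖u * star u‖ = 0 := by
    by_contra hne
    have hpos : 0 < ‖u * star u‖ := lt_of_le_of_ne (norm_nonneg _) (Ne.symm hne)
    have hb2 := key (‖u * star u‖ / (2 * (C + 1))) (by positivity)
    rw [div_mul_eq_mul_div] at hb2
    have : ‖u * star u‖ * C < ‖u * star u‖ * (2 * (C + 1)) := by nlinarith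
    have h3 : ‖u * star u‖ * C / (2 * (C + 1)) < ‖u * star u‖ := by
      rw [div_lt_iff₀ (by positivity)]
      nlinarith
    linarith
  have : ‖u‖ * ‖u‖ = 0 := by rw [← CStarRing.norm_self_mul_star, hnorm0]
  have hu0 : ‖u‖ = 0 := by nlinarith [norm_nonneg u]
  exact norm_eq_zero.mp hu0
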